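/- For every x on the unit sphere S^{n-1} in R^n, x_n^2 = (Γ((2n+1)/4) / (2 π^{(n-1)/2} Γ(3/4))) · ∫_{S^{n-1}} |⟨x,ξ⟩|^{1/2} · ( (2n+1) ξ_n^2 − 2 ) dξ. -/

import Mathlib

open MeasureTheory Real Set Metric

noncomputable section

/- ## One-dimensional lemmas -/

lemma my_integral_odd (f : ℝ → ℝ) (hf : ∀ t, f (-t) = - f t) : ∫ t : ℝ, f t = 0 := by
  have h1 : ∫ t : ℝ, f (-t) = ∫ t : ℝ, f t :=
    (Measure.measurePreserving_neg (volume : Measure ℝ)).integral_comp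
      (Homeomorph.neg ℝ).measurableEmbedding f
  simp only [hf, integral_neg] at h1
  linarith

lemma my_gauss_moment {s : ℝ} (hs : -1 < s) :
    ∫ t : ℝ, rexp (-t ^ 2) * |t| ^ s = Real.Gamma ((s + 1) / 2) := by
  have h : ∀ t : ℝ, rexp (-t ^ 2) * |t| ^ s = (fun u : ℝ => rexp (-u ^ 2) * u ^ s) |t| := by
    intro t; simp only [sq_abs]
  simp only [h]
  rw [integral_comp_abs (f := fun u : ℝ => rexp (-u ^ 2) * u ^ s)]
  have h2 : ∫ x in Ioi (0:ℝ), rexp (-x ^ 2) * x ^ s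
      = ∫ x in Ioi (0:ℝ), x ^ s * rexp (-x ^ (2:ℝ)) := by
    refine setIntegral_congr_fun measurableSet_Ioi (fun x hx => ?_)
    rw [mul_comm, Real.rpow_two]
  rw [h2, integral_rpow_mul_exp_neg_rpow (by norm_num) hs]
  ring

lemma my_gauss_integrable {s : ℝ} (hs : -1 < s) :
    Integrable (fun t : ℝ => rexp (-t ^ 2) * |t| ^ s) := by
  have hIoi : IntegrableOn (fun t : ℝ => rexp (-t ^ 2) * |t| ^ s) (Ioi 0) := by
    refine (integrableOn_rpow_mul_exp_neg_mul_sq one_pos hs).congr_fun (fun x hx => ?_)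
      measurableSet_Ioi
    rw [abs_of_pos hx]; ring_nf
  have hIic : IntegrableOn (fun t : ℝ => rexp (-t ^ 2) * |t| ^ s) (Iic 0) := by
    rw [← Measure.map_neg_eq_self (volume : Measure ℝ)]
    have m : MeasurableEmbedding fun x : ℝ => -x := (Homeomorph.neg ℝ).measurableEmbedding
    rw [m.integrableOn_map_iff]
    simp_rw [Function.comp_def, abs_neg, neg_sq, neg_preimage, neg_Iic, neg_zero]
    exact Iff.mpr integrableOn_Ici_iff_integrableOn_Ioi hIoi
  have := hIic.union hIoi
  rwa [Iic_union_Ioi, integrableOn_univ] at this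

lemma q52 (t : ℝ) : |t| ^ ((1:ℝ)/2) * (t * t) = |t| ^ ((5:ℝ)/2) := by
  rcases eq_or_ne t 0 with rfl | ht
  · simp [Real.zero_rpow]
  · have h2 : |t| ^ ((2:ℝ)) = t * t := by rw [Real.rpow_two, sq_abs, sq]
    rw [← h2, ← Real.rpow_add (abs_pos.mpr ht)]
    norm_num

lemma q2 (t : ℝ) : (t * t : ℝ) = |t| ^ ((2:ℝ)) := by rw [Real.rpow_two, sq_abs, sq]

lemma q32n (t : ℝ) : |rexp (-t ^ 2) * (|t| ^ ((1:ℝ)/2) * t)| = rexp (-t ^ 2) * |t| ^ ((3:ℝ)/2) := by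
  rcases eq_or_ne t 0 with rfl | ht
  · simp [Real.zero_rpow]
  · rw [abs_mul, abs_mul, abs_of_pos (Real.exp_pos _),
      abs_of_nonneg (Real.rpow_nonneg (abs_nonneg t) _)]
    congr 1
    rw [show ((3:ℝ)/2) = (1:ℝ)/2 + 1 by norm_num, Real.rpow_add (abs_pos.mpr ht), Real.rpow_one]

lemma q1n (t : ℝ) : |rexp (-t ^ 2) * t| = rexp (-t ^ 2) * |t| ^ ((1:ℝ)) := by
  rw [abs_mul, abs_of_pos (Real.exp_pos _), Real.rpow_one]

lemma contaux : Continuous fun t : ℝ => rexp (-t ^ 2) :=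
  Real.continuous_exp.comp (continuous_pow 2).neg

lemma contabs : Continuous fun t : ℝ => |t| ^ ((1:ℝ)/2) :=
  continuous_abs.rpow_const fun _ => Or.inr (by norm_num)

lemma I52 : Integrable (fun t : ℝ => rexp (-t ^ 2) * (|t| ^ ((1:ℝ)/2) * (t * t))) := by
  have e : ∀ t : ℝ, rexp (-t ^ 2) * |t| ^ ((5:ℝ)/2)
      = rexp (-t ^ 2) * (|t| ^ ((1:ℝ)/2) * (t * t)) := fun t => by rw [q52 t]
  exact (my_gauss_integrable (by norm_num : (-1:ℝ) < 5/2)).congr (ae_of_all _ e)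

lemma I32 : Integrable (fun t : ℝ => rexp (-t ^ 2) * (|t| ^ ((1:ℝ)/2) * t)) := by
  refine Integrable.mono' (my_gauss_integrable (by norm_num : (-1:ℝ) < 3/2))
    (Continuous.aestronglyMeasurable ?_) (ae_of_all _ fun t => le_of_eq (q32n t))
  exact contaux.mul (contabs.mul continuous_id)

lemma I12 : Integrable (fun t : ℝ => rexp (-t ^ 2) * |t| ^ ((1:ℝ)/2)) :=
  my_gauss_integrable (by norm_num : (-1:ℝ) < 1/2)

lemma I2 : Integrable (fun t : ℝ => rexp (-t ^ 2) * (t * t)) := by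
  have e : ∀ t : ℝ, rexp (-t ^ 2) * |t| ^ ((2:ℝ))
      = rexp (-t ^ 2) * (t * t) := fun t => by rw [q2 t]
  exact (my_gauss_integrable (by norm_num : (-1:ℝ) < 2)).congr (ae_of_all _ e)

lemma I1 : Integrable (fun t : ℝ => rexp (-t ^ 2) * t) := by
  refine Integrable.mono' (my_gauss_integrable (by norm_num : (-1:ℝ) < 1))
    (Continuous.aestronglyMeasurable (contaux.mul continuous_id))
    (ae_of_all _ fun t => le_of_eq (q1n t))

lemma I0 : Integrable (fun t : ℝ => rexp (-t ^ 2)) := by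
  have e : ∀ t : ℝ, rexp (-t ^ 2) * |t| ^ ((0:ℝ)) = rexp (-t ^ 2) := fun t => by
    rw [Real.rpow_zero, mul_one]
  exact (my_gauss_integrable (by norm_num : (-1:ℝ) < 0)).congr (ae_of_all _ e)

lemma mA : ∫ t : ℝ, rexp (-t ^ 2) * (|t| ^ ((1:ℝ)/2) * (t * t)) = Real.Gamma (7/4) := by
  simp only [q52]
  rw [my_gauss_moment (by norm_num : (-1:ℝ) < 5/2)]
  norm_num

lemma mB : ∫ t : ℝ, rexp (-t ^ 2) * |t| ^ ((1:ℝ)/2) = Real.Gamma (3/4) := by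
  rw [my_gauss_moment (by norm_num : (-1:ℝ) < 1/2)]
  norm_num

lemma mC : ∫ t : ℝ, rexp (-t ^ 2) * (t * t) = Real.Gamma (3/2) := by
  simp only [q2]
  rw [my_gauss_moment (by norm_num : (-1:ℝ) < 2)]
  norm_num

lemma mD : ∫ t : ℝ, rexp (-t ^ 2) = Real.sqrt π := by
  have h := my_gauss_moment (by norm_num : (-1:ℝ) < 0)
  simp only [Real.rpow_zero, mul_one] at h
  rw [h, show ((0:ℝ) + 1) / 2 = 1/2 by norm_num, Real.Gamma_one_half_eq]

lemma mE : ∫ t : ℝ, rexp (-t ^ 2) * t = 0 := by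
  refine my_integral_odd _ fun t => ?_
  rw [neg_sq]
  ring

lemma mF : ∫ t : ℝ, rexp (-t ^ 2) * (|t| ^ ((1:ℝ)/2) * t) = 0 := by
  refine my_integral_odd _ fun t => ?_
  rw [neg_sq, abs_neg]
  ring

/- ## Coordinates and polar -/


lemma my_coord_prod (p : Fin n → ℝ → ℝ) :
    ∫ z : EuclideanSpace ℝ (Fin n), ∏ i, p i (z i) = ∏ i, ∫ t : ℝ, p i t := by
  rw [← ((EuclideanSpace.volume_preserving_symm_measurableEquiv_toLp (Fin n)).symm).integral_comp'
    (fun z : EuclideanSpace ℝ (Fin n) => ∏ i, p i (z i))]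
  exact MeasureTheory.integral_fintype_prod_eq_prod (ι := Fin n) p

lemma my_coord_integrable (p : Fin n → ℝ → ℝ) (hp : ∀ i, Integrable (p i)) :
    Integrable (fun z : EuclideanSpace ℝ (Fin n) => ∏ i, p i (z i)) := by
  have h : Integrable (fun w : Fin n → ℝ => ∏ i, p i (w i)) :=
    MeasureTheory.Integrable.fintype_prod (f := p) hp
  exact ((EuclideanSpace.volume_preserving_symm_measurableEquiv_toLp (Fin n)).integrable_comp_emb
    (MeasurableEquiv.measurableEmbedding _)).mpr h

lemma my_norm_sq (z : EuclideanSpace ℝ (Fin n)) : ‖z‖ ^ 2 = ∑ i, z i ^ 2 := by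
  rw [EuclideanSpace.norm_eq, sq_sqrt (by positivity)]
  simp [sq_abs]

lemma my_exp_norm (z : EuclideanSpace ℝ (Fin n)) :
    rexp (-‖z‖ ^ 2) = ∏ i, rexp (-z i ^ 2) := by
  rw [← Real.exp_sum]
  congr 1
  rw [my_norm_sq, ← Finset.sum_neg_distrib]

lemma my_gauss_coord (f : Fin n → ℝ → ℝ) :
    ∫ z : EuclideanSpace ℝ (Fin n), rexp (-‖z‖ ^ 2) * ∏ i, f i (z i)
      = ∏ i, ∫ t : ℝ, rexp (-t ^ 2) * f i t := by
  rw [← my_coord_prod (fun i t => rexp (-t ^ 2) * f i t)]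
  congr 1; funext z
  rw [my_exp_norm, ← Finset.prod_mul_distrib]

lemma my_gauss_coord_integrable (f : Fin n → ℝ → ℝ)
    (hf : ∀ i, Integrable (fun t => rexp (-t ^ 2) * f i t)) :
    Integrable (fun z : EuclideanSpace ℝ (Fin n) => rexp (-‖z‖ ^ 2) * ∏ i, f i (z i)) := by
  have h := my_coord_integrable (fun i t => rexp (-t ^ 2) * f i t) hf
  refine h.congr (ae_of_all _ fun z => ?_)
  show _ = rexp (-‖z‖ ^ 2) * ∏ i, f i (z i)
  rw [my_exp_norm, ← Finset.prod_mul_distrib]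


lemma my_polar (hn : 1 ≤ n) (φ : EuclideanSpace ℝ (Fin n) → ℝ) (d : ℝ)
    (hφ : ∀ r : ℝ, 0 < r → ∀ ξ : EuclideanSpace ℝ (Fin n), ‖ξ‖ = 1 → φ (r • ξ) = r ^ d * φ ξ) :
    ∫ y : EuclideanSpace ℝ (Fin n), rexp (-‖y‖ ^ 2) * φ y
      = (∫ r in Ioi (0:ℝ), (r : ℝ) ^ (n - 1 : ℕ) * (r ^ d * rexp (-r ^ 2))) *
        ∫ ξ : Metric.sphere (0 : EuclideanSpace ℝ (Fin n)) 1,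
          φ (ξ : EuclideanSpace ℝ (Fin n)) ∂(volume.toSphere) := by
  haveI : Nontrivial (EuclideanSpace ℝ (Fin n)) :=
    Module.nontrivial_of_finrank_pos (R := ℝ)
      (by rw [finrank_euclideanSpace_fin]; omega)
  have dimE : Module.finrank ℝ (EuclideanSpace ℝ (Fin n)) = n := finrank_euclideanSpace_fin
  have step1 : ∫ y : EuclideanSpace ℝ (Fin n), rexp (-‖y‖ ^ 2) * φ y
      = ∫ y : ({0}ᶜ : Set (EuclideanSpace ℝ (Fin n))),
          rexp (-‖(y : EuclideanSpace ℝ (Fin n))‖ ^ 2) * φ (y : EuclideanSpace ℝ (Fin n))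
          ∂(volume.comap Subtype.val) := by
    rw [integral_subtype_comap (measurableSet_singleton 0).compl
      (fun y : EuclideanSpace ℝ (Fin n) => rexp (-‖y‖ ^ 2) * φ y), restrict_compl_singleton]
  have step2 : ∫ y : ({0}ᶜ : Set (EuclideanSpace ℝ (Fin n))),
          rexp (-‖(y : EuclideanSpace ℝ (Fin n))‖ ^ 2) * φ (y : EuclideanSpace ℝ (Fin n))
          ∂(volume.comap Subtype.val)
      = ∫ p : sphere (0 : EuclideanSpace ℝ (Fin n)) 1 × Ioi (0:ℝ),
          rexp (-‖(p.2 : ℝ) • (p.1 : EuclideanSpace ℝ (Fin n))‖ ^ 2) *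
            φ ((p.2 : ℝ) • (p.1 : EuclideanSpace ℝ (Fin n)))
          ∂((volume : Measure (EuclideanSpace ℝ (Fin n))).toSphere.prod
              (Measure.volumeIoiPow (n - 1))) := by
    have key := (Measure.measurePreserving_homeomorphUnitSphereProd
      (μ := (volume : Measure (EuclideanSpace ℝ (Fin n))))).integral_comp
      (Homeomorph.measurableEmbedding _)
      (fun p : sphere (0 : EuclideanSpace ℝ (Fin n)) 1 × Ioi (0:ℝ) =>
        rexp (-‖(p.2 : ℝ) • (p.1 : EuclideanSpace ℝ (Fin n))‖ ^ 2) *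
          φ ((p.2 : ℝ) • (p.1 : EuclideanSpace ℝ (Fin n))))
    rw [dimE] at key
    rw [← key]
    refine integral_congr_ae (ae_of_all _ fun y => ?_)
    simp only [homeomorphUnitSphereProd_apply_snd_coe, homeomorphUnitSphereProd_apply_fst_coe]
    rw [smul_inv_smul₀ (norm_ne_zero_iff.2 y.2)]
  have step3 : ∫ p : sphere (0 : EuclideanSpace ℝ (Fin n)) 1 × Ioi (0:ℝ),
          rexp (-‖(p.2 : ℝ) • (p.1 : EuclideanSpace ℝ (Fin n))‖ ^ 2) *
            φ ((p.2 : ℝ) • (p.1 : EuclideanSpace ℝ (Fin n)))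
          ∂((volume : Measure (EuclideanSpace ℝ (Fin n))).toSphere.prod
              (Measure.volumeIoiPow (n - 1)))
      = ∫ p : sphere (0 : EuclideanSpace ℝ (Fin n)) 1 × Ioi (0:ℝ),
          φ (p.1 : EuclideanSpace ℝ (Fin n)) * ((p.2 : ℝ) ^ d * rexp (-(p.2 : ℝ) ^ 2))
          ∂((volume : Measure (EuclideanSpace ℝ (Fin n))).toSphere.prod
              (Measure.volumeIoiPow (n - 1))) := by
    refine integral_congr_ae (ae_of_all _ fun p => ?_)
    show rexp (-‖(p.2 : ℝ) • (p.1 : EuclideanSpace ℝ (Fin n))‖ ^ 2) *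
        φ ((p.2 : ℝ) • (p.1 : EuclideanSpace ℝ (Fin n)))
      = φ (p.1 : EuclideanSpace ℝ (Fin n)) * ((p.2 : ℝ) ^ d * rexp (-(p.2 : ℝ) ^ 2))
    have hr : (0:ℝ) < p.2 := p.2.2
    have hξ : ‖(p.1 : EuclideanSpace ℝ (Fin n))‖ = 1 := mem_sphere_zero_iff_norm.1 p.1.2
    rw [hφ _ hr _ hξ, norm_smul, hξ, Real.norm_eq_abs, abs_of_pos hr, mul_one]
    ring
  have step4 := integral_prod_mul (L := ℝ)
      (μ := (volume : Measure (EuclideanSpace ℝ (Fin n))).toSphere)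
      (ν := Measure.volumeIoiPow (n - 1))
      (fun ξ : sphere (0 : EuclideanSpace ℝ (Fin n)) 1 => φ (ξ : EuclideanSpace ℝ (Fin n)))
      (fun r : Ioi (0:ℝ) => (r : ℝ) ^ d * rexp (-(r : ℝ) ^ 2))
  have step5 : ∫ r : Ioi (0:ℝ), (r : ℝ) ^ d * rexp (-(r:ℝ) ^ 2) ∂(Measure.volumeIoiPow (n - 1))
      = ∫ r in Ioi (0:ℝ), (r : ℝ) ^ (n - 1 : ℕ) * (r ^ d * rexp (-r ^ 2)) := by
    rw [Measure.volumeIoiPow]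
    simp only [ENNReal.ofReal]
    rw [integral_withDensity_eq_integral_smul
      ((measurable_subtype_coe.pow_const _).real_toNNReal),
      integral_subtype_comap measurableSet_Ioi
        (fun r : ℝ => Real.toNNReal (r ^ (n - 1)) • (r ^ d * rexp (-r ^ 2)))]
    refine setIntegral_congr_fun measurableSet_Ioi fun r hr => ?_
    rw [NNReal.smul_def, Real.coe_toNNReal _ (pow_nonneg (le_of_lt hr) _), smul_eq_mul]
  rw [step1, step2, step3, step4, step5, mul_comm]

/- ## Radial integral -/

lemma my_radial {n : ℕ} (hn : 1 ≤ n) {d : ℝ} (hd : 0 ≤ d) :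
    ∫ r in Ioi (0:ℝ), (r:ℝ) ^ (n - 1 : ℕ) * (r ^ d * rexp (-r ^ 2))
      = Real.Gamma (((n:ℝ) + d) / 2) / 2 := by
  have hn' : (1:ℝ) ≤ (n:ℝ) := by exact_mod_cast hn
  have h : ∫ r in Ioi (0:ℝ), (r:ℝ) ^ (n - 1 : ℕ) * (r ^ d * rexp (-r ^ 2))
      = ∫ r in Ioi (0:ℝ), r ^ (((n:ℝ) - 1) + d) * rexp (-r ^ (2:ℝ)) := by
    refine setIntegral_congr_fun measurableSet_Ioi fun r hr => ?_
    have hr0 : (0:ℝ) < r := hr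
    rw [show ((n:ℝ) - 1 + d) = ((n - 1 : ℕ) : ℝ) + d by
        rw [Nat.cast_sub hn]; push_cast; ring,
      Real.rpow_add hr0, Real.rpow_natCast, Real.rpow_two]
    ring
  rw [h, integral_rpow_mul_exp_neg_rpow (by norm_num) (by linarith : (-1:ℝ) < (n:ℝ) - 1 + d)]
  rw [show ((n:ℝ) - 1 + d + 1) / 2 = ((n:ℝ) + d) / 2 by ring]
  ring

/- ## Gaussian integrals in coordinates -/

lemma my_G1 {n : ℕ} (i0 : Fin n) :
    ∫ z : EuclideanSpace ℝ (Fin n), rexp (-‖z‖ ^ 2) * |z i0| ^ ((1:ℝ)/2)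
      = Real.Gamma (3/4) * Real.sqrt π ^ (n - 1 : ℕ) := by
  have key := my_gauss_coord (n := n) (fun k t => if k = i0 then |t| ^ ((1:ℝ)/2) else 1)
  have hp : ∀ z : EuclideanSpace ℝ (Fin n),
      (∏ k, (if k = i0 then |z k| ^ ((1:ℝ)/2) else 1)) = |z i0| ^ ((1:ℝ)/2) := by
    intro z
    rw [Finset.prod_ite_eq' Finset.univ i0 (fun k => |z k| ^ ((1:ℝ)/2))]
    simp
  simp only [hp] at key
  rw [key]
  have hv : ∀ k : Fin n, (∫ t : ℝ, rexp (-t ^ 2) * (if k = i0 then |t| ^ ((1:ℝ)/2) else 1))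
      = if k = i0 then Real.Gamma (3/4) else Real.sqrt π := by
    intro k
    by_cases hk : k = i0
    · simp only [hk, if_pos rfl]; exact mB
    · simp only [if_neg hk, mul_one]; exact mD
  simp only [hv]
  rw [← Finset.mul_prod_erase Finset.univ _ (Finset.mem_univ i0), if_pos rfl]
  congr 1
  rw [Finset.prod_congr rfl (fun k hk => if_neg (Finset.ne_of_mem_erase hk)),
    Finset.prod_const, Finset.card_erase_of_mem (Finset.mem_univ i0), Finset.card_univ,
    Fintype.card_fin]

/- ## The product function -/

def myF {n : ℕ} (i0 i j : Fin n) : Fin n → ℝ → ℝ := fun k t =>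
  (if k = i0 then |t| ^ ((1:ℝ)/2) else 1) * ((if k = i then t else 1) * (if k = j then t else 1))

lemma myF_prod {n : ℕ} (i0 i j : Fin n) (z : EuclideanSpace ℝ (Fin n)) :
    ∏ k, myF i0 i j k (z k) = |z i0| ^ ((1:ℝ)/2) * (z i * z j) := by
  unfold myF
  rw [Finset.prod_mul_distrib, Finset.prod_mul_distrib,
    Finset.prod_ite_eq' Finset.univ i0 (fun k => |z k| ^ ((1:ℝ)/2)),
    Finset.prod_ite_eq' Finset.univ i (fun k => z k),
    Finset.prod_ite_eq' Finset.univ j (fun k => z k)]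
  simp

lemma myF_int {n : ℕ} (i0 i j : Fin n) (k : Fin n) :
    Integrable (fun t : ℝ => rexp (-t ^ 2) * myF i0 i j k t) := by
  unfold myF
  by_cases h0 : k = i0
  · subst h0
    by_cases hi : k = i
    · subst hi
      by_cases hj : k = j
      · subst hj
        simp only [if_pos rfl]
        exact I52
      · simp only [if_pos rfl, if_neg hj, mul_one]
        exact I32
    · by_cases hj : k = j
      · subst hj
        simp only [if_pos rfl, if_neg hi, one_mul]
        exact I32
      · simp only [if_pos rfl, if_neg hi, if_neg hj, mul_one]
        exact I12
  · by_cases hi : k = i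
    · subst hi
      by_cases hj : k = j
      · subst hj
        simp only [if_pos rfl, if_neg h0, one_mul]
        exact I2
      · simp only [if_pos rfl, if_neg h0, if_neg hj, mul_one, one_mul]
        exact I1
    · by_cases hj : k = j
      · subst hj
        simp only [if_pos rfl, if_neg h0, if_neg hi, one_mul]
        exact I1
      · simp only [if_neg h0, if_neg hi, if_neg hj, mul_one]
        exact I0

lemma prod_ite_val {n : ℕ} (i0 : Fin n) (a b : ℝ) :
    ∏ k : Fin n, (if k = i0 then a else b) = a * b ^ (n - 1 : ℕ) := by
  rw [← Finset.mul_prod_erase Finset.univ _ (Finset.mem_univ i0), if_pos rfl]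
  congr 1
  rw [Finset.prod_congr rfl (fun k hk => if_neg (Finset.ne_of_mem_erase hk)),
    Finset.prod_const, Finset.card_erase_of_mem (Finset.mem_univ i0), Finset.card_univ,
    Fintype.card_fin]

lemma prod_ite_val2 {n : ℕ} {i0 i : Fin n} (h : i ≠ i0) (a c b : ℝ) :
    ∏ k : Fin n, (if k = i0 then a else if k = i then c else b) = a * (c * b ^ (n - 2 : ℕ)) := by
  rw [← Finset.mul_prod_erase Finset.univ _ (Finset.mem_univ i0), if_pos rfl]
  congr 1
  have hi : i ∈ Finset.univ.erase i0 := Finset.mem_erase.2 ⟨h, Finset.mem_univ i⟩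
  rw [← Finset.mul_prod_erase _ _ hi, if_neg h, if_pos rfl]
  congr 1
  rw [Finset.prod_congr rfl (fun k hk => ?_), Finset.prod_const,
    Finset.card_erase_of_mem hi, Finset.card_erase_of_mem (Finset.mem_univ i0),
    Finset.card_univ, Fintype.card_fin]
  · rfl
  · rw [if_neg (Finset.ne_of_mem_erase (Finset.mem_of_mem_erase hk)),
      if_neg (Finset.ne_of_mem_erase hk)]

lemma myF_val_diag0 {n : ℕ} (i0 : Fin n) :
    ∏ k, (∫ t : ℝ, rexp (-t ^ 2) * myF i0 i0 i0 k t)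
      = Real.Gamma (7/4) * Real.sqrt π ^ (n - 1 : ℕ) := by
  have hv : ∀ k : Fin n, (∫ t : ℝ, rexp (-t ^ 2) * myF i0 i0 i0 k t)
      = if k = i0 then Real.Gamma (7/4) else Real.sqrt π := by
    intro k
    by_cases hk : k = i0
    · subst hk
      rw [if_pos rfl]
      unfold myF
      simp only [if_pos rfl]
      exact mA
    · rw [if_neg hk]
      unfold myF
      simp only [if_neg hk, mul_one]
      exact mD
  simp only [hv]
  exact prod_ite_val i0 _ _

lemma myF_val_diag {n : ℕ} {i0 i : Fin n} (hi : i ≠ i0) :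
    ∏ k, (∫ t : ℝ, rexp (-t ^ 2) * myF i0 i i k t)
      = (1/2) * Real.Gamma (3/4) * Real.sqrt π ^ (n - 1 : ℕ) := by
  have hn2 : 2 ≤ n := by
    have h1 : 1 < Fintype.card (Fin n) := Fintype.one_lt_card_iff_nontrivial.2 ⟨⟨i, i0, hi⟩⟩
    simp at h1; omega
  have hv : ∀ k : Fin n, (∫ t : ℝ, rexp (-t ^ 2) * myF i0 i i k t)
      = if k = i0 then Real.Gamma (3/4) else if k = i then Real.Gamma (3/2) else Real.sqrt π := by
    intro k
    by_cases hk : k = i0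
    · subst hk
      rw [if_pos rfl]
      unfold myF
      simp only [if_pos rfl, if_neg (fun h => hi h.symm : ¬ (k = i)), mul_one, one_mul]
      exact mB
    · rw [if_neg hk]
      by_cases hki : k = i
      · subst hki
        rw [if_pos rfl]
        unfold myF
        simp only [if_pos rfl, if_neg hk, one_mul]
        exact mC
      · rw [if_neg hki]
        unfold myF
        simp only [if_neg hk, if_neg hki, mul_one]
        exact mD
  simp only [hv]
  rw [prod_ite_val2 hi]
  have hG32 : Real.Gamma (3/2) = Real.sqrt π / 2 := by
    rw [show (3:ℝ)/2 = 1/2 + 1 by norm_num, Real.Gamma_add_one (by norm_num), Real.Gamma_one_half_eq]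
    ring
  have hpow : Real.sqrt π ^ (n - 2 : ℕ) * Real.sqrt π = Real.sqrt π ^ (n - 1 : ℕ) := by
    rw [← pow_succ]
    congr 1
    omega
  rw [hG32]
  calc Real.Gamma (3/4) * (Real.sqrt π / 2 * Real.sqrt π ^ (n - 2 : ℕ))
      = (1/2) * Real.Gamma (3/4) * (Real.sqrt π ^ (n-2:ℕ) * Real.sqrt π) := by ring
    _ = _ := by rw [hpow]

lemma myF_val_off {n : ℕ} {i0 i j : Fin n} (hij : i ≠ j) :
    ∏ k, (∫ t : ℝ, rexp (-t ^ 2) * myF i0 i j k t) = 0 := by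
  by_cases hi : i = i0
  · subst hi
    refine Finset.prod_eq_zero (Finset.mem_univ j) ?_
    unfold myF
    have hj0 : ¬ (j = i) := fun h => hij (h ▸ rfl)
    simp only [if_neg hj0, if_pos rfl, one_mul]
    exact mE
  · refine Finset.prod_eq_zero (Finset.mem_univ i) ?_
    unfold myF
    simp only [if_pos rfl, if_neg hi, if_neg hij, one_mul, mul_one]
    exact mE

lemma my_G2 {n : ℕ} (i0 : Fin n) (c : EuclideanSpace ℝ (Fin n)) (hc : ∑ i, c i * c i = 1) :
    ∫ z : EuclideanSpace ℝ (Fin n),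
        rexp (-‖z‖ ^ 2) * (|z i0| ^ ((1:ℝ)/2) * (∑ i, c i * z i) ^ 2)
      = (c i0 * c i0) * (Real.Gamma (7/4) * Real.sqrt π ^ (n - 1 : ℕ))
        + (1 - c i0 * c i0) * ((1/2) * Real.Gamma (3/4) * Real.sqrt π ^ (n - 1 : ℕ)) := by
  have expand : ∀ z : EuclideanSpace ℝ (Fin n),
      rexp (-‖z‖ ^ 2) * (|z i0| ^ ((1:ℝ)/2) * (∑ i, c i * z i) ^ 2)
      = ∑ p ∈ Finset.univ ×ˢ Finset.univ,
          (c p.1 * c p.2) * (rexp (-‖z‖ ^ 2) * ∏ k, myF i0 p.1 p.2 k (z k)) := by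
    intro z
    rw [Finset.sum_product' (f := fun i j =>
      (c i * c j) * (rexp (-‖z‖ ^ 2) * ∏ k, myF i0 i j k (z k)))]
    simp only [myF_prod]
    rw [show (∑ i, c i * z i) ^ 2 = (∑ i, c i * z i) * (∑ j, c j * z j) from sq _,
      Finset.sum_mul_sum]
    rw [Finset.mul_sum, Finset.mul_sum]
    refine Finset.sum_congr rfl fun i _ => ?_
    rw [Finset.mul_sum, Finset.mul_sum]
    refine Finset.sum_congr rfl fun j _ => ?_
    ring
  simp only [expand]
  rw [integral_finset_sum _ (fun p _ =>
    ((my_gauss_coord_integrable _ (myF_int i0 p.1 p.2)).const_mul _))]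
  have hval : ∀ p : Fin n × Fin n,
      ∫ z : EuclideanSpace ℝ (Fin n),
          (c p.1 * c p.2) * (rexp (-‖z‖ ^ 2) * ∏ k, myF i0 p.1 p.2 k (z k))
        = (c p.1 * c p.2) * ∏ k, ∫ t : ℝ, rexp (-t ^ 2) * myF i0 p.1 p.2 k t := by
    intro p
    rw [integral_const_mul, my_gauss_coord]
  simp only [hval]
  rw [Finset.sum_product' (f := fun i j =>
    (c i * c j) * ∏ k, ∫ t : ℝ, rexp (-t ^ 2) * myF i0 i j k t)]
  have hdiag : ∀ i : Fin n,
      (∑ j, (c i * c j) * ∏ k, ∫ t : ℝ, rexp (-t ^ 2) * myF i0 i j k t)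
        = (c i * c i) * ∏ k, ∫ t : ℝ, rexp (-t ^ 2) * myF i0 i i k t := by
    intro i
    refine Finset.sum_eq_single i (fun j _ hji => ?_) (fun h => absurd (Finset.mem_univ i) h)
    rw [myF_val_off (fun h => hji h.symm), mul_zero]
  simp only [hdiag]
  rw [← Finset.add_sum_erase _ _ (Finset.mem_univ i0), myF_val_diag0]
  congr 1
  have herase : ∀ i ∈ Finset.univ.erase i0,
      (c i * c i) * (∏ k, ∫ t : ℝ, rexp (-t ^ 2) * myF i0 i i k t)
        = (c i * c i) * ((1/2) * Real.Gamma (3/4) * Real.sqrt π ^ (n - 1 : ℕ)) := by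
    intro i hi
    rw [myF_val_diag (Finset.mem_erase.1 hi).1]
  rw [Finset.sum_congr rfl herase, ← Finset.sum_mul,
    Finset.sum_erase_eq_sub (Finset.mem_univ i0), hc]

open scoped RealInnerProductSpace

theorem stmt2 (n : ℕ) (hn : 1 ≤ n)
    (x : EuclideanSpace ℝ (Fin n)) (hx : x ∈ Metric.sphere (0 : EuclideanSpace ℝ (Fin n)) 1) :
    x ⟨n - 1, by omega⟩ ^ 2 =
      Real.Gamma ((2 * n + 1) / 4) / (2 * Real.pi ^ ((n - 1 : ℝ) / 2) * Real.Gamma (3 / 4)) *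
        ∫ ξ : Metric.sphere (0 : EuclideanSpace ℝ (Fin n)) 1,
          |⟪x, (ξ : EuclideanSpace ℝ (Fin n))⟫| ^ ((1 : ℝ) / 2) *
            ((2 * n + 1) * (ξ : EuclideanSpace ℝ (Fin n)) ⟨n - 1, by omega⟩ ^ 2 - 2)
          ∂(volume.toSphere) := by
  classical
  have hx1 : ‖x‖ = 1 := mem_sphere_zero_iff_norm.1 hx
  set i0 : Fin n := ⟨0, by omega⟩ with hi0def
  set iL : Fin n := ⟨n - 1, by omega⟩ with hiLdef
  -- orthonormal basis extending x at position i0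
  have horth : Orthonormal ℝ (Set.restrict {i0} (fun _ : Fin n => x)) := by
    refine ⟨fun i => hx1, fun i j hij => absurd (Subtype.ext (i.2.trans j.2.symm)) hij⟩
  obtain ⟨b, hb⟩ := horth.exists_orthonormalBasis_extension_of_card_eq
    (by simp [finrank_euclideanSpace_fin])
  have hbx : b i0 = x := hb i0 rfl
  set c : EuclideanSpace ℝ (Fin n) := b.repr (EuclideanSpace.single iL 1) with hcdef
  have hcnorm : ∑ i, c i * c i = 1 := by
    have h1 : ‖c‖ = 1 := by
      rw [hcdef, b.repr.norm_map, EuclideanSpace.norm_single, norm_one]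
    have h2 := my_norm_sq c
    rw [h1, one_pow] at h2
    rw [← h2.symm]
    exact Finset.sum_congr rfl fun i _ => (sq (c i)).symm
  have hc0 : c i0 = x iL := by
    have h1 : c i0 = ⟪EuclideanSpace.single i0 (1:ℝ), c⟫ := by
      rw [EuclideanSpace.inner_single_left]; simp
    rw [h1, show EuclideanSpace.single i0 (1:ℝ) = b.repr (b i0) from (b.repr_self i0).symm,
      hcdef, b.repr.inner_map_map, hbx]
    rw [EuclideanSpace.inner_single_right]; simp
  -- change of variables facts
  have hTnorm : ∀ z : EuclideanSpace ℝ (Fin n), ‖b.repr.symm z‖ = ‖z‖ := fun z =>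
    b.repr.symm.norm_map z
  have hTinner : ∀ z : EuclideanSpace ℝ (Fin n), ⟪x, b.repr.symm z⟫ = z i0 := by
    intro z
    rw [← b.repr.inner_map_map x (b.repr.symm z), LinearIsometryEquiv.apply_symm_apply,
      ← hbx, b.repr_self, EuclideanSpace.inner_single_left]
    simp
  have hTcoord : ∀ z : EuclideanSpace ℝ (Fin n), (b.repr.symm z) iL = ∑ i, c i * z i := by
    intro z
    have h1 : (b.repr.symm z) iL = ⟪EuclideanSpace.single iL (1:ℝ), b.repr.symm z⟫ := by
      rw [EuclideanSpace.inner_single_left]; simp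
    have h2 : EuclideanSpace.single iL (1:ℝ) = b.repr.symm c := by
      rw [hcdef, LinearIsometryEquiv.symm_apply_apply]
    rw [h1, h2, b.repr.symm.inner_map_map]
    rw [PiLp.inner_apply]
    simp [RCLike.inner_apply, starRingEnd_apply]
    exact Finset.sum_congr rfl fun i _ => mul_comm _ _
  -- Gaussian integral values
  have hGA : ∫ y : EuclideanSpace ℝ (Fin n), rexp (-‖y‖ ^ 2) * |⟪x, y⟫| ^ ((1:ℝ)/2)
      = Real.Gamma (3/4) * Real.sqrt π ^ (n - 1 : ℕ) := by
    rw [← (b.measurePreserving_repr_symm).integral_comp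
      b.repr.symm.toHomeomorph.measurableEmbedding
      (fun y => rexp (-‖y‖ ^ 2) * |⟪x, y⟫| ^ ((1:ℝ)/2))]
    have he : ∀ z : EuclideanSpace ℝ (Fin n),
        rexp (-‖b.repr.symm z‖ ^ 2) * |⟪x, b.repr.symm z⟫| ^ ((1:ℝ)/2)
          = rexp (-‖z‖ ^ 2) * |z i0| ^ ((1:ℝ)/2) := fun z => by
      rw [hTnorm, hTinner]
    simp only [LinearIsometryEquiv.coe_toHomeomorph, Function.comp_def, he]
    exact my_G1 i0
  have hGB : ∫ y : EuclideanSpace ℝ (Fin n),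
        rexp (-‖y‖ ^ 2) * (|⟪x, y⟫| ^ ((1:ℝ)/2) * (y iL) ^ 2)
      = (x iL * x iL) * (Real.Gamma (7/4) * Real.sqrt π ^ (n - 1 : ℕ))
        + (1 - x iL * x iL) * ((1/2) * Real.Gamma (3/4) * Real.sqrt π ^ (n - 1 : ℕ)) := by
    rw [← (b.measurePreserving_repr_symm).integral_comp
      b.repr.symm.toHomeomorph.measurableEmbedding
      (fun y => rexp (-‖y‖ ^ 2) * (|⟪x, y⟫| ^ ((1:ℝ)/2) * (y iL) ^ 2))]
    have he : ∀ z : EuclideanSpace ℝ (Fin n),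
        rexp (-‖b.repr.symm z‖ ^ 2) *
            (|⟪x, b.repr.symm z⟫| ^ ((1:ℝ)/2) * ((b.repr.symm z) iL) ^ 2)
          = rexp (-‖z‖ ^ 2) * (|z i0| ^ ((1:ℝ)/2) * (∑ i, c i * z i) ^ 2) := fun z => by
      rw [hTnorm, hTinner, hTcoord]
    simp only [LinearIsometryEquiv.coe_toHomeomorph, Function.comp_def, he]
    rw [my_G2 i0 c hcnorm, hc0]
  -- polar decomposition
  have hpol2 := my_polar hn (fun y => |⟪x, y⟫| ^ ((1:ℝ)/2)) (1/2) (by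
    intro r hr ξ hξ
    simp only [inner_smul_right, abs_mul, abs_of_pos hr]
    rw [Real.mul_rpow hr.le (abs_nonneg _)])
  have hpol1 := my_polar hn (fun y => |⟪x, y⟫| ^ ((1:ℝ)/2) * (y iL) ^ 2) (5/2) (by
    intro r hr ξ hξ
    have hcoord : (r • ξ) iL = r * ξ iL := rfl
    simp only [inner_smul_right, abs_mul, abs_of_pos hr, hcoord]
    rw [Real.mul_rpow hr.le (abs_nonneg _), mul_pow,
      show ((5:ℝ)/2) = 1/2 + 2 by norm_num, Real.rpow_add hr, Real.rpow_two]
    ring)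
  -- radials
  have hrad2 := my_radial hn (by norm_num : (0:ℝ) ≤ 1/2)
  have hrad1 := my_radial hn (by norm_num : (0:ℝ) ≤ 5/2)
  set A := Real.Gamma ((2 * (n:ℝ) + 1) / 4) with hAdef
  have hA2 : Real.Gamma (((n:ℝ) + 1/2) / 2) = A := by
    rw [hAdef]; norm_num; ring_nf
  have hA1 : Real.Gamma (((n:ℝ) + 5/2) / 2) = ((2 * (n:ℝ) + 1) / 4) * A := by
    rw [hAdef, show ((n:ℝ) + 5/2) / 2 = (2 * (n:ℝ) + 1) / 4 + 1 by ring,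
      Real.Gamma_add_one (by positivity)]
  rw [hA2] at hrad2
  rw [hA1] at hrad1
  -- sphere integrals
  set S2 := ∫ ξ : Metric.sphere (0 : EuclideanSpace ℝ (Fin n)) 1,
      |⟪x, (ξ : EuclideanSpace ℝ (Fin n))⟫| ^ ((1:ℝ)/2) ∂(volume.toSphere) with hS2def
  set S1 := ∫ ξ : Metric.sphere (0 : EuclideanSpace ℝ (Fin n)) 1,
      |⟪x, (ξ : EuclideanSpace ℝ (Fin n))⟫| ^ ((1:ℝ)/2) *
        ((ξ : EuclideanSpace ℝ (Fin n)) iL) ^ 2 ∂(volume.toSphere) with hS1def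
  rw [hrad2, hGA] at hpol2
  beta_reduce at hpol1
  rw [hrad1, hGB] at hpol1
  have hG74 : Real.Gamma (7/4) = (3/4) * Real.Gamma (3/4) := by
    rw [show (7:ℝ)/4 = 3/4 + 1 by norm_num, Real.Gamma_add_one (by norm_num)]
  rw [hG74] at hpol1
  -- split the sphere integral
  have hcont2 : Continuous fun ξ : Metric.sphere (0 : EuclideanSpace ℝ (Fin n)) 1 =>
      |⟪x, (ξ : EuclideanSpace ℝ (Fin n))⟫| ^ ((1:ℝ)/2) :=
    ((Continuous.inner continuous_const continuous_subtype_val).abs).rpow_const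
      fun _ => Or.inr (by norm_num)
  have hcontL : Continuous fun ξ : Metric.sphere (0 : EuclideanSpace ℝ (Fin n)) 1 =>
      ((ξ : EuclideanSpace ℝ (Fin n)) iL) :=
    (continuous_apply iL).comp ((PiLp.continuous_ofLp 2 _).comp continuous_subtype_val)
  have hint2 : Integrable (fun ξ : Metric.sphere (0 : EuclideanSpace ℝ (Fin n)) 1 =>
      |⟪x, (ξ : EuclideanSpace ℝ (Fin n))⟫| ^ ((1:ℝ)/2)) volume.toSphere :=
    hcont2.integrable_of_hasCompactSupport (HasCompactSupport.of_compactSpace _)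
  have hint1 : Integrable (fun ξ : Metric.sphere (0 : EuclideanSpace ℝ (Fin n)) 1 =>
      |⟪x, (ξ : EuclideanSpace ℝ (Fin n))⟫| ^ ((1:ℝ)/2) *
        ((ξ : EuclideanSpace ℝ (Fin n)) iL) ^ 2) volume.toSphere :=
    (hcont2.mul (hcontL.pow 2)).integrable_of_hasCompactSupport
      (HasCompactSupport.of_compactSpace _)
  have hsplit : (∫ ξ : Metric.sphere (0 : EuclideanSpace ℝ (Fin n)) 1,
        |⟪x, (ξ : EuclideanSpace ℝ (Fin n))⟫| ^ ((1:ℝ)/2) *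
          ((2 * n + 1) * (ξ : EuclideanSpace ℝ (Fin n)) iL ^ 2 - 2) ∂(volume.toSphere))
      = (2 * n + 1) * S1 - 2 * S2 := by
    have heq : (fun ξ : Metric.sphere (0 : EuclideanSpace ℝ (Fin n)) 1 =>
        |⟪x, (ξ : EuclideanSpace ℝ (Fin n))⟫| ^ ((1:ℝ)/2) *
          ((2 * n + 1) * (ξ : EuclideanSpace ℝ (Fin n)) iL ^ 2 - 2))
        = (fun ξ : Metric.sphere (0 : EuclideanSpace ℝ (Fin n)) 1 =>
          (2 * (n:ℝ) + 1) * (|⟪x, (ξ : EuclideanSpace ℝ (Fin n))⟫| ^ ((1:ℝ)/2) *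
            ((ξ : EuclideanSpace ℝ (Fin n)) iL) ^ 2)
          - 2 * |⟪x, (ξ : EuclideanSpace ℝ (Fin n))⟫| ^ ((1:ℝ)/2)) := funext fun ξ => by ring
    rw [heq, integral_sub (hint1.const_mul _) (hint2.const_mul _),
      integral_const_mul, integral_const_mul, ← hS1def, ← hS2def]
  rw [hsplit]
  have hP : π ^ (((n:ℝ) - 1)/2) = Real.sqrt π ^ (n - 1 : ℕ) := by
    rw [show ((n:ℝ) - 1)/2 = (1/2) * ((n - 1 : ℕ) : ℝ) by
        rw [Nat.cast_sub hn]; push_cast; ring,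
      Real.rpow_mul Real.pi_pos.le, Real.rpow_natCast, ← Real.sqrt_eq_rpow]
  rw [hP]
  have hApos : 0 < A := Real.Gamma_pos_of_pos (by positivity)
  have hBpos : 0 < Real.Gamma (3/4) := Real.Gamma_pos_of_pos (by norm_num)
  have hPpos : 0 < Real.sqrt π ^ (n - 1 : ℕ) := pow_pos (Real.sqrt_pos.2 Real.pi_pos) _
  rw [sq (x iL)]
  field_simp
  linear_combination (8 : ℝ) * hpol1 - 4 * hpol2
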